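/- arXiv:1706.05709 — 6 statements merged into one kernel-verified Lean document; each statement's English description precedes it below -/
import Mathlib

section
/- Let A be an N×N complex matrix with Toeplitz decomposition A = H + iK such that H is positive definite (so A is strictly dissipative and, in particular, invertible). If p ∈ ℂ^N is a nonzero vector, θ ∈ (0, 2π), and −A⁻¹A* p = e^{iθ} p, then ⟨p, K p⟩ = cot(θ/2) · ⟨p, H p⟩ (both inner products being real numbers since H and K are Hermitian). -/
open Matrix
open scoped ComplexOrder

/-- For a strictly dissipative matrix `A = H + iK` (Toeplitz
decomposition, `H` positive definite), if `p ≠ 0`, `θ ∈ (0, 2π)` and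
`−A⁻¹A* p = e^{iθ} p`, then `⟨p, K p⟩ = cot(θ/2) · ⟨p, H p⟩`. -/
theorem stmt_0 {N : ℕ} (A H K : Matrix (Fin N) (Fin N) ℂ)
    (hH : H = (2 : ℂ)⁻¹ • (A + Aᴴ))
    (hK : K = (2 * Complex.I)⁻¹ • (A - Aᴴ))
    (hpos : H.PosDef)
    (p : Fin N → ℂ) (hp : p ≠ 0)
    (θ : ℝ) (hθ : θ ∈ Set.Ioo (0 : ℝ) (2 * Real.pi))
    (heig : (-(A⁻¹ * Aᴴ)).mulVec p = Complex.exp (θ * Complex.I) • p) :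
    star p ⬝ᵥ K.mulVec p = (Real.cot (θ / 2) : ℂ) * (star p ⬝ᵥ H.mulVec p) := by
  -- adjoint dot product identity
  have hadj : ∀ x : Fin N → ℂ, star x ⬝ᵥ Aᴴ.mulVec x = star (star x ⬝ᵥ A.mulVec x) := by
    intro x
    rw [Matrix.mulVec_conjTranspose, Matrix.star_dotProduct_star,
      ← Matrix.dotProduct_mulVec]
  -- A is invertible
  have hdet : IsUnit A.det := by
    rw [isUnit_iff_ne_zero]
    intro h0
    obtain ⟨v, hv, hAv⟩ := (Matrix.exists_mulVec_eq_zero_iff).2 h0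
    have hHv : star v ⬝ᵥ H.mulVec v = 0 := by
      rw [hH, Matrix.smul_mulVec, dotProduct_smul, Matrix.add_mulVec,
        dotProduct_add, hadj v, hAv]
      simp
    have := (Matrix.posDef_iff_dotProduct_mulVec.mp hpos).2 hv
    rw [hHv] at this
    exact lt_irrefl _ this
  set e := Complex.exp (θ * Complex.I) with he
  -- Aᴴ p = -(e • A p)
  have hAeq : Aᴴ.mulVec p = -(e • A.mulVec p) := by
    have := congrArg A.mulVec heig
    rwa [Matrix.neg_mulVec, Matrix.mulVec_neg, Matrix.mulVec_mulVec,
      ← Matrix.mul_assoc, Matrix.mul_nonsing_inv A hdet, Matrix.one_mul,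
      Matrix.mulVec_smul, neg_eq_iff_eq_neg] at this
  set a := star p ⬝ᵥ A.mulVec p with ha
  have hb : star p ⬝ᵥ Aᴴ.mulVec p = -(e * a) := by
    rw [hAeq, dotProduct_neg, dotProduct_smul, smul_eq_mul]
  -- half-angle facts
  have hsin : Real.sin (θ / 2) ≠ 0 := by
    refine ne_of_gt (Real.sin_pos_of_pos_of_lt_pi (by linarith [hθ.1]) ?_)
    linarith [hθ.2]
  have hsinC : Complex.sin ((θ : ℂ) / 2) ≠ 0 := by
    have : ((θ : ℂ) / 2) = ((θ / 2 : ℝ) : ℂ) := by push_cast; ring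
    rw [this, ← Complex.ofReal_sin]
    exact_mod_cast hsin
  have hu : Complex.exp ((θ / 2 : ℂ) * Complex.I) ≠ 0 := Complex.exp_ne_zero _
  have key : (1 + e) * Complex.sin (θ / 2) =
      Complex.I * Complex.cos (θ / 2) * (1 - e) := by
    rw [he, Complex.sin, Complex.cos]
    have h2 : (θ : ℂ) * Complex.I = ((θ/2 : ℂ) * Complex.I) + ((θ/2 : ℂ) * Complex.I) := by
      push_cast; ring
    rw [h2, Complex.exp_add]
    have hneg : Complex.exp (-((θ/2 : ℂ)) * Complex.I) =
        (Complex.exp ((θ/2 : ℂ) * Complex.I))⁻¹ := by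
      rw [← Complex.exp_neg]; ring_nf
    push_cast [hneg]
    field_simp
    ring
  have hcot : (Real.cot (θ / 2) : ℂ) = Complex.cos (θ / 2) / Complex.sin (θ / 2) := by
    rw [Real.cot_eq_cos_div_sin]
    have h1 : ((θ : ℂ) / 2) = ((θ / 2 : ℝ) : ℂ) := by push_cast; ring
    rw [h1, ← Complex.ofReal_cos, ← Complex.ofReal_sin, ← Complex.ofReal_div]
  rw [hK, hH, Matrix.smul_mulVec, Matrix.smul_mulVec, dotProduct_smul,
    dotProduct_smul, Matrix.sub_mulVec, Matrix.add_mulVec, dotProduct_sub,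
    dotProduct_add, ← ha, hb, hcot]
  have h2I : ((2 : ℂ) * Complex.I)⁻¹ = -Complex.I / 2 := by
    rw [mul_inv, Complex.inv_I]; ring
  rw [h2I, div_mul_eq_mul_div, eq_div_iff hsinC]
  simp only [smul_eq_mul]
  linear_combination (-(Complex.I) * a / 2) * key +
    (a * Complex.cos ((θ : ℂ) / 2) * (e - 1) / 2) * Complex.I_sq
end

section
/- For n ≥ 1, α_0, …, α_{n−1} in the open unit disk and τ_n on the unit circle, the matrix G(α_0,…,α_{n−1},τ_n) is unitary, its subdiagonal entries are G_{k+1,k} = ρ_0-free positive numbers, namely G_{k+1,k} = ρ_k = (1 − |α_k|²)^{1/2} > 0 for k = 0, …, n−1, and all entries strictly below the first subdiagonal vanish; that is, G(α_0,…,α_{n−1},τ_n) is a unitary upper Hessenberg matrix with positive subdiagonal elements. -/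
open Matrix
open scoped ComplexOrder

/-- `ρ(α) = (1 - |α|²)^{1/2}` -/
noncomputable def rho (α : ℂ) : ℝ := Real.sqrt (1 - ‖α‖ ^ 2)

/-- The factor `G_j = diag(I_j, Θ(α_j), I_{n-j-1})` for `0 ≤ j ≤ n-1`, where
`Θ(α) = [[conj α, ρ], [ρ, -α]]`. -/
noncomputable def Gstep (n j : ℕ) (α : ℂ) : Matrix (Fin (n + 1)) (Fin (n + 1)) ℂ :=
  Matrix.of fun k l =>
    if k.val = j ∧ l.val = j then (starRingEnd ℂ) α
    else if k.val = j ∧ l.val = j + 1 then (rho α : ℂ)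
    else if k.val = j + 1 ∧ l.val = j then (rho α : ℂ)
    else if k.val = j + 1 ∧ l.val = j + 1 then -α
    else if k = l then 1 else 0

/-- The factor `G_n = diag(I_n, conj τ_n)`. -/
noncomputable def Glast (n : ℕ) (τ : ℂ) : Matrix (Fin (n + 1)) (Fin (n + 1)) ℂ :=
  Matrix.of fun k l => if k = l then (if k.val = n then (starRingEnd ℂ) τ else 1) else 0

/-- `G(α_0, …, α_{n-1}, τ_n) := G_0 G_1 ⋯ G_n`. -/
noncomputable def Gmat (n : ℕ) (α : ℕ → ℂ) (τ : ℂ) : Matrix (Fin (n + 1)) (Fin (n + 1)) ℂ :=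
  (((List.range n).map fun j => Gstep n j (α j)).prod) * Glast n τ

lemma rho_conj (β : ℂ) : rho ((starRingEnd ℂ) β) = rho β := by
  simp [rho]

lemma sum_pair_support {N : ℕ} (a b : Fin N) (hab : a ≠ b) (f : Fin N → ℂ)
    (h : ∀ t, t ≠ a → t ≠ b → f t = 0) : ∑ t, f t = f a + f b := by
  have h1 : ∑ t ∈ ({a, b} : Finset (Fin N)), f t = ∑ t, f t := by
    apply Finset.sum_subset (Finset.subset_univ _)
    intro t _ ht
    simp only [Finset.mem_insert, Finset.mem_singleton, not_or] at ht
    exact h t ht.1 ht.2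
  rw [← h1, Finset.sum_pair hab]

lemma mul_Gstep {n : ℕ} (m : ℕ) (hm : m < n) (β : ℂ)
    (P : Matrix (Fin (n+1)) (Fin (n+1)) ℂ) (k l : Fin (n+1)) :
    (P * Gstep n m β) k l =
      if l.val = m then
        (starRingEnd ℂ) β * P k ⟨m, Nat.lt_succ_of_lt hm⟩ + (rho β : ℂ) * P k ⟨m+1, Nat.succ_lt_succ hm⟩
      else if l.val = m + 1 then
        (rho β : ℂ) * P k ⟨m, Nat.lt_succ_of_lt hm⟩ + (-β) * P k ⟨m+1, Nat.succ_lt_succ hm⟩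
      else P k l := by
  rw [Matrix.mul_apply]
  by_cases h1 : l.val = m
  · rw [if_pos h1]
    rw [sum_pair_support ⟨m, by omega⟩ ⟨m+1, by omega⟩ (by simp [Fin.ext_iff])
      _ (by
        intro t ht1 ht2
        have h2 : t.val ≠ m := fun h => ht1 (Fin.ext h)
        have h3 : t.val ≠ m + 1 := fun h => ht2 (Fin.ext h)
        have h4 : t ≠ l := fun h => h2 (by rw [h, h1])
        simp [Gstep, h1, h2, h3, h4])]
    have e1 : Gstep n m β ⟨m, by omega⟩ l = (starRingEnd ℂ) β := by
      simp [Gstep, h1]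
    have e2 : Gstep n m β ⟨m+1, by omega⟩ l = (rho β : ℂ) := by
      have hne : ¬ (m + 1 = m) := by omega
      simp [Gstep, h1, hne]
    rw [e1, e2]; ring
  · rw [if_neg h1]
    by_cases h2 : l.val = m + 1
    · rw [if_pos h2]
      rw [sum_pair_support ⟨m, by omega⟩ ⟨m+1, by omega⟩ (by simp [Fin.ext_iff])
        _ (by
          intro t ht1 ht2
          have h3 : t.val ≠ m := fun h => ht1 (Fin.ext h)
          have h4 : t.val ≠ m + 1 := fun h => ht2 (Fin.ext h)
          have h5 : t ≠ l := fun h => h4 (by rw [h, h2])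
          simp [Gstep, h2, h3, h4, h5])]
      have hne : ¬ (m + 1 = m) := by omega
      have e1 : Gstep n m β ⟨m, by omega⟩ l = (rho β : ℂ) := by
        simp [Gstep, h1, h2, hne]
      have e2 : Gstep n m β ⟨m+1, by omega⟩ l = -β := by
        simp [Gstep, h1, h2, hne]
      rw [e1, e2]; ring
    · rw [if_neg h2]
      have hs : ∑ t, P k t * Gstep n m β t l = P k l * Gstep n m β l l := by
        apply Finset.sum_eq_single l
        · intro t _ ht
          have h3 : ¬ (t.val = m ∧ l.val = m) := by omega
          have h4 : ¬ (t.val = m ∧ l.val = m + 1) := by omega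
          have h5 : ¬ (t.val = m + 1 ∧ l.val = m) := by omega
          have h6 : ¬ (t.val = m + 1 ∧ l.val = m + 1) := by omega
          simp [Gstep, h3, h4, h5, h6, ht]
        · intro h; exact absurd (Finset.mem_univ l) h
      rw [hs]
      have h3 : ¬ (l.val = m ∧ l.val = m) := by omega
      have h4 : ¬ (l.val = m ∧ l.val = m + 1) := by omega
      have h5 : ¬ (l.val = m + 1 ∧ l.val = m) := by omega
      have h6 : ¬ (l.val = m + 1 ∧ l.val = m + 1) := by omega
      simp [Gstep, h1, h2, h3, h4, h5, h6]

example : True := trivial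

lemma star_Gstep (n j : ℕ) (β : ℂ) :
    star (Gstep n j β) = Gstep n j ((starRingEnd ℂ) β) := by
  rw [Matrix.star_eq_conjTranspose]
  ext k l
  rw [Matrix.conjTranspose_apply]
  have hne : ¬ (j + 1 = j) := by omega
  by_cases c1 : k.val = j <;> by_cases c2 : k.val = j + 1 <;>
    by_cases d1 : l.val = j <;> by_cases d2 : l.val = j + 1 <;>
      simp [Gstep, c1, c2, d1, d2, hne, Complex.star_def, Complex.conj_ofReal, rho_conj,
        eq_comm] <;>
      first
        | omega
        | (split_ifs <;>
            first
              | omega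
              | simp [Complex.star_def, Complex.conj_ofReal])

lemma key_rho (β : ℂ) (hβ : ‖β‖ < 1) :
    (rho β : ℂ) * (rho β : ℂ) + (starRingEnd ℂ) β * β = 1 := by
  have h0 : (0:ℝ) ≤ 1 - ‖β‖ ^ 2 := by nlinarith [norm_nonneg β]
  have h1 : rho β * rho β = 1 - ‖β‖ ^ 2 := Real.mul_self_sqrt h0
  have h2 : (starRingEnd ℂ) β * β = ((‖β‖ ^ 2 : ℝ) : ℂ) := by
    rw [mul_comm, Complex.mul_conj, Complex.sq_norm]
  rw [h2, ← Complex.ofReal_mul, h1]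
  push_cast; ring

lemma Gstep_mem (n j : ℕ) (hj : j < n) (β : ℂ) (hβ : ‖β‖ < 1) :
    Gstep n j β ∈ Matrix.unitaryGroup (Fin (n+1)) ℂ := by
  have key := key_rho β hβ
  rw [Matrix.mem_unitaryGroup_iff, star_Gstep]
  ext k l
  rw [mul_Gstep j hj]
  simp only [Complex.conj_conj, rho_conj]
  have hne : ¬ (j + 1 = j) := by omega
  have gj : Gstep n j β k ⟨j, by omega⟩ =
      if k.val = j then (starRingEnd ℂ) β else if k.val = j + 1 then (rho β : ℂ) else 0 := by
    by_cases c1 : k.val = j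
    · simp [Gstep, c1]
    · by_cases c2 : k.val = j + 1
      · simp [Gstep, c1, c2, hne]
      · have : ¬ k = ⟨j, by omega⟩ := by simp [Fin.ext_iff, c1]
        simp [Gstep, c1, c2, this]
  have gj1 : Gstep n j β k ⟨j + 1, by omega⟩ =
      if k.val = j then (rho β : ℂ) else if k.val = j + 1 then -β else 0 := by
    by_cases c1 : k.val = j
    · simp [Gstep, c1, hne]
    · by_cases c2 : k.val = j + 1
      · simp [Gstep, c1, c2, hne]
      · have : ¬ k = ⟨j + 1, by omega⟩ := by simp [Fin.ext_iff, c2]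
        simp [Gstep, c1, c2, this]
  rw [gj, gj1, Matrix.one_apply]
  by_cases h1 : l.val = j
  · rw [if_pos h1]
    by_cases c1 : k.val = j
    · have hkl : k = l := Fin.ext (by omega)
      rw [if_pos c1, if_pos c1, if_pos hkl]
      linear_combination key
    · by_cases c2 : k.val = j + 1
      · have hkl : ¬ k = l := by simp [Fin.ext_iff]; omega
        rw [if_neg c1, if_neg c1, if_pos c2, if_pos c2, if_neg hkl]
        ring
      · have hkl : ¬ k = l := by simp [Fin.ext_iff]; omega
        rw [if_neg c1, if_neg c1, if_neg c2, if_neg c2, if_neg hkl]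
        ring
  · rw [if_neg h1]
    by_cases h2 : l.val = j + 1
    · rw [if_pos h2]
      by_cases c1 : k.val = j
      · have hkl : ¬ k = l := by simp [Fin.ext_iff]; omega
        rw [if_pos c1, if_pos c1, if_neg hkl]
        ring
      · by_cases c2 : k.val = j + 1
        · have hkl : k = l := Fin.ext (by omega)
          rw [if_neg c1, if_neg c1, if_pos c2, if_pos c2, if_pos hkl]
          linear_combination key
        · have hkl : ¬ k = l := by simp [Fin.ext_iff]; omega
          rw [if_neg c1, if_neg c1, if_neg c2, if_neg c2, if_neg hkl]
          ring
    · rw [if_neg h2]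
      have h3 : ¬ (k.val = j ∧ l.val = j) := by omega
      have h4 : ¬ (k.val = j ∧ l.val = j + 1) := by omega
      have h5 : ¬ (k.val = j + 1 ∧ l.val = j) := by omega
      have h6 : ¬ (k.val = j + 1 ∧ l.val = j + 1) := by omega
      simp [Gstep, h3, h4, h5, h6]

lemma Glast_eq (n : ℕ) (τ : ℂ) :
    Glast n τ = Matrix.diagonal (fun k : Fin (n+1) => if k.val = n then (starRingEnd ℂ) τ else 1) := by
  ext k l
  by_cases h : k = l <;> simp [Glast, Matrix.diagonal_apply, h]

lemma Glast_mem (n : ℕ) (τ : ℂ) (hτ : ‖τ‖ = 1) :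
    Glast n τ ∈ Matrix.unitaryGroup (Fin (n+1)) ℂ := by
  rw [Matrix.mem_unitaryGroup_iff, Glast_eq, Matrix.star_eq_conjTranspose,
    Matrix.diagonal_conjTranspose, Matrix.diagonal_mul_diagonal]
  have h1 : (starRingEnd ℂ) τ * τ = 1 := by
    rw [mul_comm, Complex.mul_conj, Complex.normSq_eq_norm_sq, hτ]
    norm_num
  ext k l
  rcases eq_or_ne k l with h | h
  · subst h
    by_cases hk : k.val = n <;>
      simp [Matrix.diagonal_apply, Matrix.one_apply, hk, Complex.star_def, h1]
  · simp [Matrix.diagonal_apply, Matrix.one_apply, h]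

lemma prodP (n : ℕ) (α : ℕ → ℂ) (m : ℕ) (hm : m ≤ n) :
    (∀ k l : Fin (n+1), m < k.val →
      (((List.range m).map fun j => Gstep n j (α j)).prod) k l = if k = l then 1 else 0) ∧
    (∀ k l : Fin (n+1), l.val + 1 < k.val →
      (((List.range m).map fun j => Gstep n j (α j)).prod) k l = 0) ∧
    (∀ k, (hk : k < m) →
      (((List.range m).map fun j => Gstep n j (α j)).prod) ⟨k+1, by omega⟩ ⟨k, by omega⟩
        = (rho (α k) : ℂ)) := by
  induction m with
  | zero =>
    refine ⟨?_, ?_, ?_⟩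
    · intro k l _; simp [Matrix.one_apply]
    · intro k l h
      have : ¬ k = l := by simp [Fin.ext_iff]; omega
      simp [Matrix.one_apply, this]
    · intro k hk; omega
  | succ m ih =>
    have hmn : m < n := by omega
    obtain ⟨ha, hb, hc⟩ := ih (by omega)
    set P := (((List.range m).map fun j => Gstep n j (α j)).prod) with hPdef
    have hP : (((List.range (m+1)).map fun j => Gstep n j (α j)).prod)
        = P * Gstep n m (α m) := by
      rw [List.range_succ, List.map_append, List.prod_append]
      simp [hPdef]
    refine ⟨?_, ?_, ?_⟩
    · intro k l hk
      rw [hP, mul_Gstep m hmn]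
      by_cases h1 : l.val = m
      · rw [if_pos h1]
        have e1 : P k ⟨m, by omega⟩ = 0 := by
          rw [ha k ⟨m, by omega⟩ (by omega), if_neg (by simp [Fin.ext_iff]; omega)]
        have e2 : P k ⟨m+1, by omega⟩ = 0 := by
          rw [ha k ⟨m+1, by omega⟩ (by omega), if_neg (by simp [Fin.ext_iff]; omega)]
        rw [e1, e2, if_neg (by simp [Fin.ext_iff]; omega)]
        ring
      · rw [if_neg h1]
        by_cases h2 : l.val = m + 1
        · rw [if_pos h2]
          have e1 : P k ⟨m, by omega⟩ = 0 := by
            rw [ha k ⟨m, by omega⟩ (by omega), if_neg (by simp [Fin.ext_iff]; omega)]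
          have e2 : P k ⟨m+1, by omega⟩ = 0 := by
            rw [ha k ⟨m+1, by omega⟩ (by omega), if_neg (by simp [Fin.ext_iff]; omega)]
          rw [e1, e2, if_neg (by simp [Fin.ext_iff]; omega)]
          ring
        · rw [if_neg h2]
          exact ha k l (by omega)
    · intro k l hkl
      rw [hP, mul_Gstep m hmn]
      by_cases h1 : l.val = m
      · rw [if_pos h1]
        have e1 : P k ⟨m, by omega⟩ = 0 := by
          rw [ha k ⟨m, by omega⟩ (by omega), if_neg (by simp [Fin.ext_iff]; omega)]
        have e2 : P k ⟨m+1, by omega⟩ = 0 := by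
          rw [ha k ⟨m+1, by omega⟩ (by omega), if_neg (by simp [Fin.ext_iff]; omega)]
        rw [e1, e2]; ring
      · rw [if_neg h1]
        by_cases h2 : l.val = m + 1
        · rw [if_pos h2]
          have e1 : P k ⟨m, by omega⟩ = 0 := by
            rw [ha k ⟨m, by omega⟩ (by omega), if_neg (by simp [Fin.ext_iff]; omega)]
          have e2 : P k ⟨m+1, by omega⟩ = 0 := by
            rw [ha k ⟨m+1, by omega⟩ (by omega), if_neg (by simp [Fin.ext_iff]; omega)]
          rw [e1, e2]; ring
        · rw [if_neg h2]
          exact hb k l hkl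
    · intro k hk
      rw [hP, mul_Gstep m hmn]
      by_cases h1 : k = m
      · subst h1
        rw [if_pos rfl]
        have e1 : P ⟨k+1, by omega⟩ ⟨k, by omega⟩ = 0 := by
          rw [ha _ _ (by simp), if_neg (by simp [Fin.ext_iff])]
        have e2 : P ⟨k+1, by omega⟩ ⟨k+1, by omega⟩ = 1 := by
          rw [ha _ _ (by simp), if_pos rfl]
        rw [e1, e2]; ring
      · have hkm : k < m := by omega
        have h2 : ¬ ((⟨k, by omega⟩ : Fin (n+1)).val = m) := by simp; omega
        have h3 : ¬ ((⟨k, by omega⟩ : Fin (n+1)).val = m + 1) := by simp; omega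
        rw [if_neg h2, if_neg h3]
        exact hc k hkm


/-- `G(α_0,…,α_{n-1},τ_n)` is a unitary upper Hessenberg matrix with
positive subdiagonal elements `ρ_k = (1 - |α_k|²)^{1/2}`. -/
theorem stmt_1 (n : ℕ) (hn : 1 ≤ n) (α : ℕ → ℂ)
    (hα : ∀ j, j < n → ‖α j‖ < 1)
    (τ : ℂ) (hτ : ‖τ‖ = 1) :
    Gmat n α τ ∈ Matrix.unitaryGroup (Fin (n + 1)) ℂ ∧
    (∀ k, (hk : k < n) →
      Gmat n α τ ⟨k + 1, by omega⟩ ⟨k, by omega⟩ = (rho (α k) : ℂ) ∧ 0 < rho (α k)) ∧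
    (∀ k l : Fin (n + 1), l.val + 1 < k.val → Gmat n α τ k l = 0) := by
  obtain ⟨ha, hb, hc⟩ := prodP n α n le_rfl
  have hG : ∀ k l : Fin (n+1), Gmat n α τ k l =
      (((List.range n).map fun j => Gstep n j (α j)).prod) k l *
        (if l.val = n then (starRingEnd ℂ) τ else 1) := by
    intro k l
    rw [Gmat, Glast_eq, Matrix.mul_diagonal]
  refine ⟨?_, ?_, ?_⟩
  · apply Submonoid.mul_mem
    · apply Submonoid.list_prod_mem
      intro x hx
      simp only [List.mem_map, List.mem_range] at hx
      obtain ⟨j, hj, rfl⟩ := hx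
      exact Gstep_mem n j hj (α j) (hα j hj)
    · exact Glast_mem n τ hτ
  · intro k hk
    have hrpos : 0 < rho (α k) := by
      have := hα k hk
      apply Real.sqrt_pos.mpr
      nlinarith [norm_nonneg (α k)]
    refine ⟨?_, hrpos⟩
    rw [hG]
    have hkn : ¬ ((⟨k, by omega⟩ : Fin (n+1)).val = n) := by simp; omega
    rw [if_neg hkn, mul_one]
    exact hc k hk
  · intro k l hkl
    rw [hG, hb k l hkl, zero_mul]
end

section
/- Let n ≥ 1, let α_0, …, α_{n−1} lie in the open unit disk and τ_n on the unit circle, and let 0 ≤ j ≤ n−1. Partition G(α_0,…,α_{n−1},τ_n) into blocks so that G_11 is the leading principal submatrix of size (j+1)×(j+1) and G_22 is the trailing principal submatrix of size (n−j)×(n−j). Then G_22 has no eigenvalue of modulus 1; that is, det(G_22 − ζ·I) ≠ 0 for every complex ζ with |ζ| = 1. -/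
open Matrix
open scoped ComplexOrder

/-! ### embedding `M ↦ diag(1, M)` -/

noncomputable def embedG {m : ℕ} (M : Matrix (Fin (m + 1)) (Fin (m + 1)) ℂ) :
    Matrix (Fin (m + 2)) (Fin (m + 2)) ℂ :=
  Matrix.of fun k => Fin.cases (Fin.cons 1 0) (fun k' => Fin.cons 0 (M k')) k

@[simp] lemma embedG_zero_zero {m : ℕ} (M : Matrix (Fin (m + 1)) (Fin (m + 1)) ℂ) :
    embedG M 0 0 = 1 := rfl

@[simp] lemma embedG_zero_succ {m : ℕ} (M : Matrix (Fin (m + 1)) (Fin (m + 1)) ℂ)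
    (l : Fin (m + 1)) : embedG M 0 l.succ = 0 := by
  show (Fin.cons (1:ℂ) 0 : Fin (m+2) → ℂ) l.succ = 0
  simp

@[simp] lemma embedG_succ_zero {m : ℕ} (M : Matrix (Fin (m + 1)) (Fin (m + 1)) ℂ)
    (k : Fin (m + 1)) : embedG M k.succ 0 = 0 := by
  show (Fin.cases (Fin.cons 1 0) (fun k' => Fin.cons 0 (M k')) k.succ : Fin (m+2) → ℂ) 0 = 0
  rw [Fin.cases_succ]
  simp

@[simp] lemma embedG_succ_succ {m : ℕ} (M : Matrix (Fin (m + 1)) (Fin (m + 1)) ℂ)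
    (k l : Fin (m + 1)) : embedG M k.succ l.succ = M k l := by
  show (Fin.cases (Fin.cons 1 0) (fun k' => Fin.cons 0 (M k')) k.succ : Fin (m+2) → ℂ) l.succ = M k l
  rw [Fin.cases_succ]
  simp

@[simp] lemma embedG_zero_one {m : ℕ} (M : Matrix (Fin (m + 1)) (Fin (m + 1)) ℂ) :
    embedG M 0 1 = 0 := by
  rw [← Fin.succ_zero_eq_one, embedG_zero_succ]

@[simp] lemma embedG_succ_one {m : ℕ} (M : Matrix (Fin (m + 1)) (Fin (m + 1)) ℂ)
    (k : Fin (m + 1)) : embedG M k.succ 1 = M k 0 := by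
  rw [← Fin.succ_zero_eq_one, embedG_succ_succ]

lemma embedG_one {m : ℕ} : embedG (1 : Matrix (Fin (m + 1)) (Fin (m + 1)) ℂ) = 1 := by
  ext k l
  cases k using Fin.cases with
  | zero =>
    cases l using Fin.cases with
    | zero => simp
    | succ l' => simp [Matrix.one_apply, (Fin.succ_ne_zero l').symm]
  | succ k' =>
    cases l using Fin.cases with
    | zero => simp [Matrix.one_apply, Fin.succ_ne_zero k']
    | succ l' => simp [Matrix.one_apply, Fin.succ_inj]

lemma embedG_mul {m : ℕ} (M N : Matrix (Fin (m + 1)) (Fin (m + 1)) ℂ) :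
    embedG (M * N) = embedG M * embedG N := by
  ext k l
  rw [Matrix.mul_apply, Fin.sum_univ_succ]
  cases k using Fin.cases with
  | zero =>
    cases l using Fin.cases with
    | zero => simp
    | succ l' => simp
  | succ k' =>
    cases l using Fin.cases with
    | zero => simp
    | succ l' => simp [Matrix.mul_apply]

noncomputable def embedGHom (m : ℕ) :
    Matrix (Fin (m + 1)) (Fin (m + 1)) ℂ →* Matrix (Fin (m + 2)) (Fin (m + 2)) ℂ where
  toFun := embedG
  map_one' := embedG_one
  map_mul' := embedG_mul

lemma embedG_mulVec {m : ℕ} (M : Matrix (Fin (m + 1)) (Fin (m + 1)) ℂ) (x : Fin (m + 2) → ℂ) :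
    embedG M *ᵥ x = Fin.cons (x 0) (M *ᵥ fun i => x i.succ) := by
  funext k
  cases k using Fin.cases with
  | zero => simp [Matrix.mulVec, dotProduct, Fin.sum_univ_succ]
  | succ k' =>
    simp [Matrix.mulVec, dotProduct, Fin.sum_univ_succ, Fin.succ_zero_eq_one]

lemma Gstep_succ_embed {n j : ℕ} (β : ℂ) :
    Gstep (n + 1) (j + 1) β = embedG (Gstep n j β) := by
  ext k l
  cases k using Fin.cases with
  | zero =>
    cases l using Fin.cases with
    | zero => simp [Gstep]
    | succ l' => simp [Gstep, (Fin.succ_ne_zero l').symm]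
  | succ k' =>
    cases l using Fin.cases with
    | zero => simp [Gstep, Fin.succ_ne_zero k']
    | succ l' =>
      simp [Gstep, Fin.val_succ, Fin.succ_inj]

lemma Glast_succ_embed {n : ℕ} (τ : ℂ) :
    Glast (n + 1) τ = embedG (Glast n τ) := by
  ext k l
  cases k using Fin.cases with
  | zero =>
    cases l using Fin.cases with
    | zero => simp [Glast]
    | succ l' => simp [Glast, (Fin.succ_ne_zero l').symm]
  | succ k' =>
    cases l using Fin.cases with
    | zero => simp [Glast, Fin.succ_ne_zero k']
    | succ l' => simp [Glast, Fin.val_succ, Fin.succ_inj]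

lemma Gmat_zero (α : ℕ → ℂ) (τ : ℂ) : Gmat 0 α τ = Glast 0 τ := by
  simp [Gmat]

lemma Gmat_succ (n : ℕ) (α : ℕ → ℂ) (τ : ℂ) :
    Gmat (n + 1) α τ = Gstep (n + 1) 0 (α 0) * embedG (Gmat n (fun i => α (i + 1)) τ) := by
  unfold Gmat
  rw [List.range_succ_eq_map, List.map_cons, List.prod_cons, List.map_map, mul_assoc]
  congr 1
  have h1 : ((List.range n).map ((fun j => Gstep (n + 1) j (α j)) ∘ Nat.succ)).prod
      = embedG (((List.range n).map fun j => Gstep n j (α (j + 1))).prod) := by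
    have : (List.range n).map ((fun j => Gstep (n + 1) j (α j)) ∘ Nat.succ)
        = (List.range n).map (⇑(embedGHom n) ∘ fun j => Gstep n j (α (j + 1))) := by
      apply List.map_congr_left
      intro j _
      simp only [Function.comp_apply, embedGHom, MonoidHom.coe_mk, OneHom.coe_mk]
      exact Gstep_succ_embed (α (j + 1))
    rw [this, ← List.map_map, List.prod_hom]
    rfl
  rw [h1, Glast_succ_embed, ← embedG_mul]

lemma Glast_mulVec {n : ℕ} (τ : ℂ) (x : Fin (n + 1) → ℂ) :
    Glast n τ *ᵥ x = fun k => (if k.val = n then (starRingEnd ℂ) τ else 1) * x k := by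
  funext k
  simp [Matrix.mulVec, dotProduct, Glast, ite_mul, Finset.sum_ite_eq]

lemma Gstep0_mulVec {n : ℕ} (α : ℂ) (x : Fin (n + 2) → ℂ) :
    Gstep (n + 1) 0 α *ᵥ x =
      Fin.cons ((starRingEnd ℂ) α * x 0 + (rho α : ℂ) * x 1)
        (Fin.cons ((rho α : ℂ) * x 0 - α * x 1) (fun m => x m.succ.succ)) := by
  have hone : ∀ m : Fin n, (1 : Fin (n + 2)) ≠ m.succ.succ := by
    intro m h
    rw [← Fin.succ_zero_eq_one, Fin.succ_inj] at h
    exact (Fin.succ_ne_zero m) h.symm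
  funext k
  cases k using Fin.cases with
  | zero =>
    rw [Matrix.mulVec, dotProduct, Fin.sum_univ_succ, Fin.sum_univ_succ]
    simp [Gstep, Fin.succ_zero_eq_one, Fin.val_succ, (Fin.succ_ne_zero _).symm]
  | succ k' =>
    cases k' using Fin.cases with
    | zero =>
      rw [Matrix.mulVec, dotProduct, Fin.sum_univ_succ, Fin.sum_univ_succ]
      simp [Gstep, Fin.succ_zero_eq_one, Fin.val_succ, (Fin.succ_ne_zero _).symm,
        Fin.succ_inj, sub_eq_add_neg, hone]
    | succ m =>
      rw [Matrix.mulVec, dotProduct, Fin.sum_univ_succ, Fin.sum_univ_succ]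
      simp [Gstep, Fin.succ_zero_eq_one, Fin.val_succ, Fin.succ_ne_zero,
        (Fin.succ_ne_zero _).symm, Fin.succ_inj, fun m => (hone m).symm]

lemma rho_sq_complex {α : ℂ} (hα : ‖α‖ < 1) :
    ((rho α : ℂ)) * (rho α : ℂ) = 1 - α * (starRingEnd ℂ) α := by
  have h0 : (0:ℝ) ≤ 1 - ‖α‖ ^ 2 := by nlinarith [norm_nonneg α]
  have h1 : (rho α) * (rho α) = 1 - ‖α‖ ^ 2 := by
    have := Real.sq_sqrt h0
    rw [rho]; nlinarith [this]
  have h2 : α * (starRingEnd ℂ) α = ((‖α‖ ^ 2 : ℝ) : ℂ) := by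
    rw [Complex.mul_conj, Complex.normSq_eq_norm_sq]
  rw [h2, ← Complex.ofReal_mul, h1]
  push_cast
  ring

lemma rho_ne_zero {α : ℂ} (hα : ‖α‖ < 1) : ((rho α : ℂ)) ≠ 0 := by
  have h0 : (0:ℝ) < 1 - ‖α‖ ^ 2 := by nlinarith [norm_nonneg α]
  have : 0 < rho α := Real.sqrt_pos.mpr h0
  exact_mod_cast ne_of_gt this

lemma core_identity {α : ℂ} (hα : ‖α‖ < 1) (a b : ℂ) :
    Complex.normSq ((starRingEnd ℂ) α * a + (rho α : ℂ) * b)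
      + Complex.normSq ((rho α : ℂ) * a - α * b)
      = Complex.normSq a + Complex.normSq b := by
  have key : ∀ z : ℂ, ((Complex.normSq z : ℝ) : ℂ) = z * (starRingEnd ℂ) z :=
    fun z => (Complex.mul_conj z).symm
  apply Complex.ofReal_injective
  push_cast [key]
  simp only [map_add, _root_.map_mul, map_sub, Complex.conj_conj, Complex.conj_ofReal]
  linear_combination (a * (starRingEnd ℂ) a + b * (starRingEnd ℂ) b) * rho_sq_complex hα

lemma Gstep0_form {n : ℕ} {α : ℂ} (hα : ‖α‖ < 1) (x : Fin (n + 2) → ℂ) :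
    ∑ k, Complex.normSq ((Gstep (n + 1) 0 α *ᵥ x) k) = ∑ k, Complex.normSq (x k) := by
  have hcons1 : ∀ (c : ℂ) (g : Fin (n + 1) → ℂ), (Fin.cons c g : Fin (n + 2) → ℂ) 1 = g 0 := by
    intro c g
    rw [← Fin.succ_zero_eq_one, Fin.cons_succ]
  rw [Gstep0_mulVec]
  rw [Fin.sum_univ_succ, Fin.sum_univ_succ, Fin.sum_univ_succ (f := fun k => Complex.normSq (x k)),
    Fin.sum_univ_succ (f := fun k => Complex.normSq (x (Fin.succ k)))]
  simp only [Fin.cons_zero, Fin.cons_succ, Fin.succ_zero_eq_one, hcons1]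
  rw [← add_assoc, ← add_assoc, core_identity hα]

lemma Gmat_form : ∀ (n : ℕ) (α : ℕ → ℂ), (∀ i, i < n → ‖α i‖ < 1) →
    ∀ (τ : ℂ), ‖τ‖ = 1 → ∀ x : Fin (n + 1) → ℂ,
    ∑ k, Complex.normSq ((Gmat n α τ *ᵥ x) k) = ∑ k, Complex.normSq (x k) := by
  intro n
  induction n with
  | zero =>
    intro α _ τ hτ x
    rw [Gmat_zero, Glast_mulVec]
    refine Finset.sum_congr rfl fun k _ => ?_
    have hk : (k : ℕ) = 0 := by omega
    simp only []
    rw [if_pos hk, _root_.map_mul, Complex.normSq_conj, Complex.normSq_eq_norm_sq, hτ]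
    norm_num
  | succ m ih =>
    intro α hα τ hτ x
    rw [Gmat_succ, ← Matrix.mulVec_mulVec, Gstep0_form (hα 0 (by omega))]
    rw [embedG_mulVec, Fin.sum_univ_succ, Fin.sum_univ_succ (f := fun k => Complex.normSq (x k))]
    simp only [Fin.cons_zero, Fin.cons_succ]
    rw [ih (fun i => α (i + 1)) (fun i hi => hα (i + 1) (by omega)) τ hτ]

lemma Gmat_inj_zero : ∀ (n : ℕ) (α : ℕ → ℂ), (∀ i, i < n → ‖α i‖ < 1) →
    ∀ (τ ζ : ℂ), ζ ≠ 0 → ∀ x : Fin (n + 1) → ℂ,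
    Gmat n α τ *ᵥ x = ζ • x → x 0 = 0 → x = 0 := by
  intro n
  induction n with
  | zero =>
    intro α _ τ ζ _ x _ hx0
    funext k
    have : k = 0 := Fin.ext (by omega)
    rw [this, hx0]; rfl
  | succ m ih =>
    intro α hα τ ζ hζ x h hx0
    have hα0 : ‖α 0‖ < 1 := hα 0 (by omega)
    set M' := Gmat m (fun i => α (i + 1)) τ with hM'
    set x' : Fin (m + 1) → ℂ := fun i => x i.succ with hx'
    rw [Gmat_succ, ← Matrix.mulVec_mulVec, embedG_mulVec, Gstep0_mulVec] at h
    set y : Fin (m + 2) → ℂ := Fin.cons (x 0) (M' *ᵥ x') with hy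
    have hy0 : y 0 = 0 := by rw [hy, Fin.cons_zero, hx0]
    have hy1 : y 1 = (M' *ᵥ x') 0 := by rw [hy, ← Fin.succ_zero_eq_one, Fin.cons_succ]
    -- evaluate at 0
    have h0 := congrFun h 0
    simp only [Fin.cons_zero, Pi.smul_apply, smul_eq_mul] at h0
    rw [hx0, mul_zero, hy0, mul_zero, zero_add, hy1] at h0
    have hMx'0 : (M' *ᵥ x') 0 = 0 := by
      rcases mul_eq_zero.mp h0 with h | h
      · exact absurd h (rho_ne_zero hα0)
      · exact h
    -- evaluate at 1
    have h1 := congrFun h (Fin.succ (0 : Fin (m + 1)))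
    rw [Fin.cons_succ, Fin.cons_zero] at h1
    rw [hy0, hy1, hMx'0, mul_zero, mul_zero, sub_zero] at h1
    have hx1 : x (0 : Fin (m + 1)).succ = 0 := by
      have := h1.symm
      simp only [Pi.smul_apply, smul_eq_mul, Fin.succ_zero_eq_one] at this
      rcases mul_eq_zero.mp this with h | h
      · exact absurd h hζ
      · rw [Fin.succ_zero_eq_one]; exact h
    -- the eigenvector equation for x'
    have heq' : M' *ᵥ x' = ζ • x' := by
      funext i
      cases i using Fin.cases with
      | zero =>
        rw [hMx'0]
        simp only [Pi.smul_apply, smul_eq_mul]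
        rw [hx', ]
        simp only []
        rw [hx1, mul_zero]
      | succ i' =>
        have h2 := congrFun h i'.succ.succ
        simp only [Fin.cons_succ, Pi.smul_apply, smul_eq_mul] at h2
        have hyv : y i'.succ.succ = (M' *ᵥ x') i'.succ := by
          rw [hy, Fin.cons_succ]
        rw [hyv] at h2
        simpa using h2
    have hx'0 : x' 0 = 0 := by rw [hx']; exact hx1
    have := ih (fun i => α (i + 1)) (fun i hi => hα (i + 1) (by omega)) τ ζ hζ x' heq' hx'0
    funext k
    cases k using Fin.cases with
    | zero => exact hx0
    | succ k' =>
      have : x' k' = 0 := by rw [this]; rfl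
      exact this

lemma mem_image_shift {N J : ℕ} (hJ : J + 1 ≤ N) (l : Fin (N + 1)) :
    l ∈ Finset.univ.image
      (fun i : Fin (N - J) => (⟨J + 1 + i.val, by have := i.isLt; omega⟩ : Fin (N + 1)))
      ↔ J + 1 ≤ l.val := by
  constructor
  · intro hl
    obtain ⟨i, -, hi⟩ := Finset.mem_image.mp hl
    rw [← hi]
    simp
  · intro hl
    refine Finset.mem_image.mpr ⟨⟨l.val - (J + 1), by have := l.isLt; omega⟩,
      Finset.mem_univ _, ?_⟩
    apply Fin.ext
    simp
    omega

lemma sum_collapseG {β : Type*} [AddCommMonoid β] {N J : ℕ} (hJ : J + 1 ≤ N)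
    (f : Fin (N + 1) → β) (hf : ∀ l : Fin (N + 1), l.val < J + 1 → f l = 0) :
    ∑ l, f l = ∑ i : Fin (N - J),
      f ⟨J + 1 + i.val, by have := i.isLt; omega⟩ := by
  classical
  set S : Fin (N - J) → Fin (N + 1) :=
    fun i => ⟨J + 1 + i.val, by have := i.isLt; omega⟩ with hS
  have hinj : ∀ a ∈ Finset.univ, ∀ b ∈ Finset.univ, S a = S b → a = b := by
    intro a _ b _ hab
    have := congrArg Fin.val hab
    simp only [hS] at this
    exact Fin.ext (by omega)
  have h1 : ∑ l ∈ Finset.univ.image S, f l = ∑ i, f (S i) := Finset.sum_image hinj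
  have h2 : ∑ l ∈ Finset.univ.image S, f l = ∑ l, f l := by
    apply Finset.sum_subset (Finset.subset_univ _)
    intro l _ hl
    apply hf
    by_contra hc
    exact hl ((mem_image_shift hJ l).mpr (by omega))
  rw [← h2, h1]

/-- For `0 ≤ j ≤ n-1`, the trailing principal submatrix `G_22` of size
`(n-j)×(n-j)` of `G(α_0,…,α_{n-1},τ_n)` has no eigenvalue on the unit circle:
`det(G_22 - ζ·I) ≠ 0` for every `ζ` with `|ζ| = 1`. -/
theorem stmt_2 (n : ℕ) (hn : 1 ≤ n) (α : ℕ → ℂ)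
    (hα : ∀ i, i < n → ‖α i‖ < 1)
    (τ : ℂ) (hτ : ‖τ‖ = 1)
    (j : ℕ) (hj : j ≤ n - 1)
    (ζ : ℂ) (hζ : ‖ζ‖ = 1) :
    ((Gmat n α τ).submatrix
        (fun i : Fin (n - j) => (⟨j + 1 + i.val, by have := i.isLt; omega⟩ : Fin (n + 1)))
        (fun i : Fin (n - j) => (⟨j + 1 + i.val, by have := i.isLt; omega⟩ : Fin (n + 1)))
      - ζ • (1 : Matrix (Fin (n - j)) (Fin (n - j)) ℂ)).det ≠ 0 := by
  intro hdet
  classical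
  have hjn : j + 1 ≤ n := by omega
  obtain ⟨v, hv0, hv⟩ := Matrix.exists_mulVec_eq_zero_iff.mpr hdet
  set M := Gmat n α τ with hM
  set S : Fin (n - j) → Fin (n + 1) :=
    fun i => ⟨j + 1 + i.val, by have := i.isLt; omega⟩ with hS
  have heig : (M.submatrix S S) *ᵥ v = ζ • v := by
    have h1 := hv
    rw [Matrix.sub_mulVec, Matrix.smul_mulVec, Matrix.one_mulVec, sub_eq_zero] at h1
    exact h1
  set xh : Fin (n + 1) → ℂ := fun l =>
    if h : j + 1 ≤ l.val then v ⟨l.val - (j + 1), by have := l.isLt; omega⟩ else 0 with hxh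
  have haS : ∀ i, xh (S i) = v i := by
    intro i
    have hpos : j + 1 ≤ (S i).val := by simp [hS]
    rw [hxh]
    simp only []
    rw [dif_pos hpos]
    congr 1
    apply Fin.ext
    simp [hS]
  have hlow : ∀ l : Fin (n + 1), l.val < j + 1 → xh l = 0 := by
    intro l hl
    rw [hxh]
    simp only []
    rw [dif_neg (by omega)]
  have hc : ∀ i, (M *ᵥ xh) (S i) = ζ * v i := by
    intro i
    have hstart : (M *ᵥ xh) (S i) = ∑ l, M (S i) l * xh l := rfl
    rw [hstart, sum_collapseG hjn (fun l => M (S i) l * xh l)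
      (fun l hl => by show M (S i) l * xh l = 0; rw [hlow l hl, mul_zero])]
    have h2 : (M.submatrix S S *ᵥ v) i = ζ * v i := by rw [heig]; rfl
    rw [← h2]
    refine Finset.sum_congr rfl fun k _ => ?_
    show M (S i) (S k) * xh (S k) = M (S i) (S k) * v k
    rw [haS k]
  have hform := Gmat_form n α hα τ hτ xh
  have hrhs : ∑ k, Complex.normSq (xh k) = ∑ i : Fin (n - j), Complex.normSq (v i) := by
    rw [sum_collapseG hjn _ (fun l hl => by show Complex.normSq (xh l) = 0; rw [hlow l hl]; simp)]
    refine Finset.sum_congr rfl fun k _ => ?_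
    show Complex.normSq (xh (S k)) = _
    rw [haS k]
  have himg : ∑ i : Fin (n - j), Complex.normSq ((M *ᵥ xh) (S i))
      = ∑ i : Fin (n - j), Complex.normSq (v i) := by
    refine Finset.sum_congr rfl fun i _ => ?_
    rw [hc i, _root_.map_mul]
    have hnζ : Complex.normSq ζ = 1 := by rw [Complex.normSq_eq_norm_sq, hζ]; norm_num
    rw [hnζ, one_mul]
  have hsub : ∑ l ∈ Finset.univ.image S, Complex.normSq ((M *ᵥ xh) l)
      = ∑ i : Fin (n - j), Complex.normSq ((M *ᵥ xh) (S i)) := by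
    apply Finset.sum_image
    intro a _ b _ hab
    have hval := congrArg Fin.val hab
    simp only [hS] at hval
    exact Fin.ext (by omega)
  have hdiff : ∑ l ∈ Finset.univ \ Finset.univ.image S, Complex.normSq ((M *ᵥ xh) l) = 0 := by
    rw [Finset.sum_sdiff_eq_sub (Finset.subset_univ (Finset.univ.image S)),
      hform, hrhs, hsub, himg, sub_self]
  have hzero : ∀ l ∈ Finset.univ \ Finset.univ.image S, Complex.normSq ((M *ᵥ xh) l) = 0 :=
    (Finset.sum_eq_zero_iff_of_nonneg (fun l _ => Complex.normSq_nonneg _)).mp hdiff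
  have hMx : M *ᵥ xh = ζ • xh := by
    funext l
    by_cases hl : l ∈ Finset.univ.image S
    · obtain ⟨i, -, rfl⟩ := Finset.mem_image.mp hl
      show (M *ᵥ xh) (S i) = ζ * xh (S i)
      rw [hc i, haS i]
    · have h0 : (M *ᵥ xh) l = 0 :=
        Complex.normSq_eq_zero.mp (hzero l (Finset.mem_sdiff.mpr ⟨Finset.mem_univ _, hl⟩))
      have hxl : xh l = 0 := by
        apply hlow l
        by_contra hcon
        exact hl ((mem_image_shift hjn l).mpr (by omega))
      rw [h0, Pi.smul_apply, hxl, smul_zero]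
  have hζ0 : ζ ≠ 0 := by
    intro h; rw [h] at hζ; simp at hζ
  have hxh0 : xh 0 = 0 := hlow 0 (by simp)
  have hall := Gmat_inj_zero n α hα τ ζ hζ0 xh hMx hxh0
  apply hv0
  funext i
  calc v i = xh (S i) := (haS i).symm
  _ = 0 := by rw [hall]; rfl
end

section
/- Let I be an open real interval, let M : I → M_N(ℂ) be a differentiable matrix-valued function with M(t) Hermitian for every t ∈ I, let q : I → ℂ^N and θ : I → ℝ be differentiable with q(t) ≠ 0, θ(t) ∈ (0, 2π), and M(t) q(t) = cot(θ(t)/2) · q(t) for all t ∈ I. Then for every t ∈ I, ⟨q(t), M′(t) q(t)⟩ = ‖q(t)‖² · θ′(t) / (cos θ(t) − 1). In particular, θ is strictly increasing at t (the corresponding eigenvalue e^{iθ(t)} moves counterclockwise) if and only if ⟨q(t), M′(t) q(t)⟩ < 0. -/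
open Matrix

/-- If `M(t)` is a differentiable Hermitian matrix function on an open
interval, `q(t) ≠ 0` a differentiable eigenvector function and `θ(t) ∈ (0, 2π)` a
differentiable function with `M(t) q(t) = cot(θ(t)/2) q(t)`, then
`⟨q, M' q⟩ = ‖q‖² θ' / (cos θ − 1)`; in particular `θ' > 0` iff `⟨q, M' q⟩ < 0`. -/
theorem stmt_11 {N : ℕ} (a b : ℝ)
    (M M' : ℝ → Matrix (Fin N) (Fin N) ℂ)
    (q : ℝ → Fin N → ℂ) (θ θ' : ℝ → ℝ)
    (hM : ∀ t ∈ Set.Ioo a b, ∀ i j, HasDerivAt (fun s => M s i j) (M' t i j) t)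
    (hMherm : ∀ t ∈ Set.Ioo a b, (M t).IsHermitian)
    (hq : ∀ t ∈ Set.Ioo a b, ∀ i, DifferentiableAt ℝ (fun s => q s i) t)
    (hθ : ∀ t ∈ Set.Ioo a b, HasDerivAt θ (θ' t) t)
    (hq0 : ∀ t ∈ Set.Ioo a b, q t ≠ 0)
    (hθrange : ∀ t ∈ Set.Ioo a b, θ t ∈ Set.Ioo (0 : ℝ) (2 * Real.pi))
    (heig : ∀ t ∈ Set.Ioo a b, (M t).mulVec (q t) = (Real.cot (θ t / 2) : ℂ) • q t) :
    ∀ t ∈ Set.Ioo a b,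
      star (q t) ⬝ᵥ (M' t).mulVec (q t)
        = (star (q t) ⬝ᵥ q t) * ((θ' t : ℂ) / ((Real.cos (θ t) : ℂ) - 1)) ∧
      (0 < θ' t ↔ (star (q t) ⬝ᵥ (M' t).mulVec (q t)).re < 0) := by
  intro t ht
  obtain ⟨hta, htb⟩ := ht
  have ht' : t ∈ Set.Ioo a b := ⟨hta, htb⟩
  have hmem : Set.Ioo a b ∈ nhds t := Ioo_mem_nhds hta htb
  -- eigenvector derivative
  set q'v : Fin N → ℂ := fun i => deriv (fun s => q s i) t with hq'v
  have hqd : ∀ i, HasDerivAt (fun s => q s i) (q'v i) t := fun i => (hq t ht' i).hasDerivAt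
  set lam : ℝ := Real.cot (θ t / 2) with hlamdef
  -- sin nonzero
  have hθt := hθrange t ht'
  have hpi := Real.pi_pos
  have hhalf1 : 0 < θ t / 2 := by linarith [hθt.1]
  have hhalf2 : θ t / 2 < Real.pi := by linarith [hθt.2]
  have hsin : Real.sin (θ t / 2) ≠ 0 :=
    ne_of_gt (Real.sin_pos_of_pos_of_lt_pi hhalf1 hhalf2)
  -- derivative of λ = cot(θ/2)
  have hθd2 : HasDerivAt (fun s => θ s / 2) (θ' t / 2) t := (hθ t ht').div_const 2
  have hcos : HasDerivAt (fun s => Real.cos (θ s / 2)) (-Real.sin (θ t / 2) * (θ' t / 2)) t :=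
    by have := (Real.hasDerivAt_cos (θ t / 2)).comp t hθd2; exact this
  have hsin' : HasDerivAt (fun s => Real.sin (θ s / 2)) (Real.cos (θ t / 2) * (θ' t / 2)) t :=
    by have := (Real.hasDerivAt_sin (θ t / 2)).comp t hθd2; exact this
  have hlamR : HasDerivAt (fun s => Real.cot (θ s / 2))
      (-(θ' t) / (2 * Real.sin (θ t / 2) ^ 2)) t := by
    have h := hcos.div hsin' hsin
    simp only [Real.cot_eq_cos_div_sin]
    refine h.congr_deriv ?_
    have h1 : Real.sin (θ t / 2) ^ 2 + Real.cos (θ t / 2) ^ 2 = 1 :=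
      Real.sin_sq_add_cos_sq _
    rw [div_eq_div_iff (pow_ne_zero 2 hsin) (mul_ne_zero two_ne_zero (pow_ne_zero 2 hsin))]
    linear_combination (-(θ' t) * Real.sin (θ t / 2) ^ 2) * h1
  have hlamC : HasDerivAt (fun s => ((Real.cot (θ s / 2) : ℝ) : ℂ))
      (((-(θ' t) / (2 * Real.sin (θ t / 2) ^ 2) : ℝ)) : ℂ) t := hlamR.ofReal_comp
  -- the two scalar functions
  set hfun : ℝ → ℂ := fun s => ∑ i, star (q s i) * q s i with hhfun
  set H' : ℂ := ∑ i, (star (q'v i) * q t i + star (q t i) * q'v i) with hH'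
  have hh : HasDerivAt hfun H' t := by
    apply HasDerivAt.fun_sum
    intro i _
    exact ((hqd i).star).mul (hqd i)
  set gfun : ℝ → ℂ := fun s => ∑ i, star (q s i) * ∑ j, M s i j * q s j with hgfun
  set G : ℂ := ∑ i, (star (q'v i) * ∑ j, M t i j * q t j
      + star (q t i) * ∑ j, (M' t i j * q t j + M t i j * q'v j)) with hG
  have hg : HasDerivAt gfun G t := by
    apply HasDerivAt.fun_sum
    intro i _
    exact ((hqd i).star).mul (HasDerivAt.fun_sum fun j _ => (hM t ht' i j).mul (hqd j))
  -- g = λ * h on the interval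
  have heq : ∀ s ∈ Set.Ioo a b, gfun s = ((Real.cot (θ s / 2) : ℝ) : ℂ) * hfun s := by
    intro s hs
    have key : ∀ i, star (q s i) * ∑ j, M s i j * q s j
        = ((Real.cot (θ s / 2) : ℝ) : ℂ) * (star (q s i) * q s i) := by
      intro i
      have h1 : (∑ j, M s i j * q s j) = (((Real.cot (θ s / 2) : ℝ) : ℂ) • q s) i := by
        rw [← heig s hs]; rfl
      rw [h1, Pi.smul_apply, smul_eq_mul]; ring
    simp only [hgfun, hhfun, key, ← Finset.mul_sum]
  have hg2 : HasDerivAt gfun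
      ((((-(θ' t) / (2 * Real.sin (θ t / 2) ^ 2) : ℝ)) : ℂ) * hfun t
        + ((lam : ℝ) : ℂ) * H') t := by
    refine (hlamC.mul hh).congr_of_eventuallyEq ?_
    filter_upwards [hmem] with s hs
    exact heq s hs
  have huniq : G = (((-(θ' t) / (2 * Real.sin (θ t / 2) ^ 2) : ℝ)) : ℂ) * hfun t
      + ((lam : ℝ) : ℂ) * H' := hg.unique hg2
  -- identify the three pieces of G
  set A : ℂ := ∑ i, star (q'v i) * q t i with hA
  set B : ℂ := star (q t) ⬝ᵥ (M' t).mulVec (q t) with hB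
  set C : ℂ := ∑ i, star (q t i) * q'v i with hC
  have hGsplit : G = (lam : ℂ) * A + B + (lam : ℂ) * C := by
    have e1 : (∑ i, star (q'v i) * ∑ j, M t i j * q t j) = (lam : ℂ) * A := by
      have h1 : ∀ i, (∑ j, M t i j * q t j) = (M t).mulVec (q t) i := fun i => rfl
      simp only [h1, heig t ht', Pi.smul_apply, smul_eq_mul, hA, Finset.mul_sum]
      exact Finset.sum_congr rfl fun i _ => by ring
    have e2 : (∑ i, star (q t i) * ∑ j, M' t i j * q t j) = B := rfl
    have e3 : (∑ i, star (q t i) * ∑ j, M t i j * q'v j) = (lam : ℂ) * C := by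
      have h1 : (∑ i, star (q t i) * ∑ j, M t i j * q'v j)
          = star (q t) ⬝ᵥ (M t).mulVec q'v := rfl
      have h2 : star (q t) ᵥ* (M t) = star ((M t).mulVec (q t)) := by
        rw [Matrix.star_mulVec, (hMherm t ht').eq]
      rw [h1, Matrix.dotProduct_mulVec, h2, heig t ht']
      simp only [star_smul, smul_dotProduct, Complex.star_def, Complex.conj_ofReal,
        smul_eq_mul, hC]
      rfl
    calc G = (∑ i, star (q'v i) * ∑ j, M t i j * q t j)
          + ((∑ i, star (q t i) * ∑ j, M' t i j * q t j)
            + (∑ i, star (q t i) * ∑ j, M t i j * q'v j)) := by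
          simp only [hG, Finset.sum_add_distrib, mul_add]
      _ = (lam : ℂ) * A + B + (lam : ℂ) * C := by rw [e1, e2, e3]; ring
  have hH'split : H' = A + C := by
    simp only [hH', hA, hC, Finset.sum_add_distrib]
  -- conclude B = λ' * h(t)
  have hBval : B = (((-(θ' t) / (2 * Real.sin (θ t / 2) ^ 2) : ℝ)) : ℂ) * hfun t := by
    rw [hGsplit, hH'split] at huniq
    linear_combination huniq
  -- rewrite λ' in terms of cos θ − 1
  have hcosθ : Real.cos (θ t) - 1 = -(2 * Real.sin (θ t / 2) ^ 2) := by
    have h2 := Real.cos_two_mul (θ t / 2)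
    have h3 : 2 * (θ t / 2) = θ t := by ring
    rw [h3] at h2
    nlinarith [Real.sin_sq_add_cos_sq (θ t / 2)]
  have hcosθne : Real.cos (θ t) - 1 ≠ 0 := by
    rw [hcosθ]
    have : 0 < Real.sin (θ t / 2) ^ 2 := pow_pos (Real.sin_pos_of_pos_of_lt_pi hhalf1 hhalf2) 2
    intro h; nlinarith
  have hlam' : (((-(θ' t) / (2 * Real.sin (θ t / 2) ^ 2) : ℝ)) : ℂ)
      = (θ' t : ℂ) / ((Real.cos (θ t) : ℂ) - 1) := by
    have hreal : -(θ' t) / (2 * Real.sin (θ t / 2) ^ 2) = θ' t / (Real.cos (θ t) - 1) := by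
      rw [hcosθ, div_neg, neg_div]
    have hcast : ((Real.cos (θ t) : ℂ) - 1) = ((Real.cos (θ t) - 1 : ℝ) : ℂ) := by push_cast; ring
    rw [hcast, hreal, Complex.ofReal_div]
  -- h(t) = star q ⬝ᵥ q
  have hhval : hfun t = star (q t) ⬝ᵥ q t := rfl
  have hmain : star (q t) ⬝ᵥ (M' t).mulVec (q t)
      = (star (q t) ⬝ᵥ q t) * ((θ' t : ℂ) / ((Real.cos (θ t) : ℂ) - 1)) := by
    rw [← hB, hBval, hlam', hhval]; ring
  refine ⟨hmain, ?_⟩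
  -- positivity of ⟨q,q⟩
  set r : ℝ := ∑ i, Complex.normSq (q t i) with hr
  have hqq : star (q t) ⬝ᵥ q t = ((r : ℝ) : ℂ) := by
    simp only [dotProduct, Pi.star_apply, hr]
    push_cast
    exact Finset.sum_congr rfl fun i _ => by
      rw [Complex.star_def, mul_comm, Complex.mul_conj]
  have hrpos : 0 < r := by
    obtain ⟨i, hi⟩ : ∃ i, q t i ≠ 0 := by
      by_contra h
      push_neg at h
      exact hq0 t ht' (funext h)
    exact Finset.sum_pos' (fun j _ => Complex.normSq_nonneg _)
      ⟨i, Finset.mem_univ i, Complex.normSq_pos.mpr hi⟩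
  have hre : (star (q t) ⬝ᵥ (M' t).mulVec (q t)).re
      = r * (θ' t / (Real.cos (θ t) - 1)) := by
    rw [hmain, hqq]
    have : ((r : ℝ) : ℂ) * ((θ' t : ℂ) / ((Real.cos (θ t) : ℂ) - 1))
        = ((r * (θ' t / (Real.cos (θ t) - 1)) : ℝ) : ℂ) := by
      push_cast
      try ring
    rw [this, Complex.ofReal_re]
  rw [hre]
  have hcneg : Real.cos (θ t) - 1 < 0 := by
    rw [hcosθ]
    have : 0 < Real.sin (θ t / 2) ^ 2 := pow_pos (Real.sin_pos_of_pos_of_lt_pi hhalf1 hhalf2) 2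
    linarith
  constructor
  · intro h
    have : θ' t / (Real.cos (θ t) - 1) < 0 := div_neg_of_pos_of_neg h hcneg
    exact mul_neg_of_pos_of_neg hrpos this
  · intro h
    by_contra hle
    push_neg at hle
    have h1 : 0 ≤ θ' t / (Real.cos (θ t) - 1) := by
      rw [div_nonneg_iff]
      exact Or.inr ⟨hle, le_of_lt hcneg⟩
    have : 0 ≤ r * (θ' t / (Real.cos (θ t) - 1)) := mul_nonneg (le_of_lt hrpos) h1
    linarith
end

section
/- For all real numbers a and b, the polynomials r̃_j satisfy the three-term recurrence relation r̃_{j+1}(z) = ((a + j − ib) + (a + j + ib) z) · r̃_j(z) − j (2a + j − 1) z · r̃_{j−1}(z) for every integer j ≥ 0, with the conventions r̃_{−1}(z) := 0 and r̃_0(z) := 1, as an identity of polynomials in ℂ[z]. -/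
open Polynomial

/-- The Pochhammer symbol (rising factorial) `(x)_m = x(x+1)⋯(x+m-1)` in `ℂ`. -/
noncomputable def pochC (x : ℂ) (m : ℕ) : ℂ := (ascPochhammer ℂ m).eval x

/-- `r̃_j(z) := Σ_{k=0}^{j} (−1)^k · C(j,k) · (a+bi)_k · (2a+k)_{j−k} · (1−z)^k`,
which equals `(2a)_j · ₂F₁(−j, a+bi; 2a; 1−z)`. -/
noncomputable def rpoly (a b : ℝ) (j : ℕ) : Polynomial ℂ :=
  ∑ k ∈ Finset.range (j + 1),
    Polynomial.C ((-1 : ℂ) ^ k * (j.choose k : ℂ) * pochC ((a : ℂ) + (b : ℂ) * Complex.I) k *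
        pochC (2 * (a : ℂ) + (k : ℂ)) (j - k)) * (1 - Polynomial.X) ^ k

lemma pochC_zero (x : ℂ) : pochC x 0 = 1 := by simp [pochC]
lemma pochC_succ (x : ℂ) (n : ℕ) : pochC x (n+1) = pochC x n * (x + n) :=
  ascPochhammer_succ_eval n x
lemma pochC_succ_left (x : ℂ) (n : ℕ) : pochC x (n+1) = x * pochC (x+1) n := by
  unfold pochC; rw [ascPochhammer_succ_left]; simp [eval_comp]

noncomputable def cc (a b : ℝ) (j k : ℕ) : ℂ :=
  (-1:ℂ)^k * (j.choose k : ℂ) * pochC ((a:ℂ) + (b:ℂ)*Complex.I) k * pochC (2*(a:ℂ) + (k:ℂ)) (j-k)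

lemma cc_eq_zero (a b : ℝ) {j k : ℕ} (h : j < k) : cc a b j k = 0 := by
  simp [cc, Nat.choose_eq_zero_of_lt h]

lemma rpoly_ext (a b : ℝ) (j N : ℕ) (h : j < N) :
    rpoly a b j = ∑ k ∈ Finset.range N, C (cc a b j k) * (1 - X) ^ k := by
  rw [show rpoly a b j = ∑ k ∈ Finset.range (j+1), C (cc a b j k) * (1 - X) ^ k from rfl]
  refine Finset.sum_subset (Finset.range_subset_range.2 h) fun x _ hx => ?_
  rw [cc_eq_zero a b (by simpa using hx), map_zero, zero_mul]

lemma extend (n : ℕ) (f : ℕ → ℂ) (h : f n = 0) :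
    ∑ k ∈ Finset.range (n+1), C (f k) * (1 - X : ℂ[X]) ^ k
      = ∑ k ∈ Finset.range n, C (f k) * (1 - X) ^ k := by
  rw [Finset.sum_range_succ, h, map_zero, zero_mul, add_zero]

lemma shift (n : ℕ) (e : ℕ → ℂ) :
    ∑ k ∈ Finset.range n, C (e k) * (1 - X : ℂ[X]) ^ (k+1)
      = ∑ k ∈ Finset.range (n+1), C (if k = 0 then 0 else e (k-1)) * (1 - X) ^ k := by
  rw [Finset.sum_range_succ']
  simp

lemma mulsplit (p q : ℂ) (n : ℕ) (f : ℕ → ℂ) :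
    (C p + C q * X) * ∑ k ∈ Finset.range n, C (f k) * (1 - X) ^ k
      = (∑ k ∈ Finset.range n, C ((p + q) * f k) * (1 - X) ^ k)
        - ∑ k ∈ Finset.range n, C (q * f k) * (1 - X) ^ (k+1) := by
  rw [Finset.mul_sum, ← Finset.sum_sub_distrib]
  refine Finset.sum_congr rfl fun k _ => ?_
  simp only [map_mul, map_add]
  ring

lemma mulsplit2 (q : ℂ) (n : ℕ) (f : ℕ → ℂ) :
    C q * X * ∑ k ∈ Finset.range n, C (f k) * (1 - X) ^ k
      = (∑ k ∈ Finset.range n, C (q * f k) * (1 - X) ^ k)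
        - ∑ k ∈ Finset.range n, C (q * f k) * (1 - X) ^ (k+1) := by
  rw [Finset.mul_sum, ← Finset.sum_sub_distrib]
  refine Finset.sum_congr rfl fun k _ => ?_
  simp only [map_mul]
  ring

lemma shift' (n : ℕ) (e : ℕ → ℂ) (h : e n = 0) :
    ∑ k ∈ Finset.range (n+1), C (e k) * (1 - X : ℂ[X]) ^ (k+1)
      = ∑ k ∈ Finset.range (n+1), C (if k = 0 then 0 else e (k-1)) * (1 - X) ^ k := by
  rw [Finset.sum_range_succ, h, map_zero, zero_mul, add_zero, shift]
lemma keyA (a b : ℝ) (J : ℕ) :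
    cc a b (J+2) 0 =
      (2*(a:ℂ) + 2*((J:ℂ)+1)) * cc a b (J+1) 0
        - ((J:ℂ)+1) * (2*(a:ℂ) + ((J:ℂ)+1) - 1) * cc a b J 0 := by
  simp only [cc, pow_zero, Nat.choose_zero_right, Nat.cast_one, pochC_zero, Nat.sub_zero,
    Nat.cast_zero, one_mul, mul_one, add_zero]
  rw [show J + 2 = (J+1)+1 from rfl, pochC_succ, pochC_succ]
  push_cast
  ring

lemma keyB (a b : ℝ) (J k : ℕ) :
    cc a b (J+2) (k+1) =
      (2*(a:ℂ) + 2*((J:ℂ)+1)) * cc a b (J+1) (k+1)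
        - (((a:ℂ) + (b:ℂ)*Complex.I) + ((J:ℂ)+1)) * cc a b (J+1) k
        - ((J:ℂ)+1) * (2*(a:ℂ) + ((J:ℂ)+1) - 1) * cc a b J (k+1)
        + ((J:ℂ)+1) * (2*(a:ℂ) + ((J:ℂ)+1) - 1) * cc a b J k := by
  rcases Nat.lt_or_ge k J with h | h
  · -- interior: J = k + 1 + m
    obtain ⟨m, rfl⟩ : ∃ m, J = k + 1 + m := ⟨J - (k+1), by omega⟩
    simp only [cc]
    simp only [show k+1+m+2 - (k+1) = m+2 from by omega,
      show k+1+m+1 - (k+1) = m+1 from by omega,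
      show k+1+m+1 - k = m+2 from by omega,
      show k+1+m - (k+1) = m from by omega,
      show k+1+m - k = m+1 from by omega]
    have hbase : (2*(a:ℂ) + ((k+1:ℕ):ℂ)) = 2*(a:ℂ) + (k:ℂ) + 1 := by push_cast; ring
    rw [hbase]
    have hA : pochC ((a:ℂ) + (b:ℂ)*Complex.I) (k+1)
        = pochC ((a:ℂ) + (b:ℂ)*Complex.I) k * ((a:ℂ) + (b:ℂ)*Complex.I + k) := pochC_succ _ _
    have h1 : pochC (2*(a:ℂ) + (k:ℂ) + 1) (m+2)
        = pochC (2*(a:ℂ) + (k:ℂ) + 1) m * (2*(a:ℂ)+(k:ℂ)+1+(m:ℂ)) * (2*(a:ℂ)+(k:ℂ)+1+(m:ℂ)+1) := by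
      rw [pochC_succ, pochC_succ]; push_cast; ring
    have h2 : pochC (2*(a:ℂ) + (k:ℂ) + 1) (m+1)
        = pochC (2*(a:ℂ) + (k:ℂ) + 1) m * (2*(a:ℂ)+(k:ℂ)+1+(m:ℂ)) := pochC_succ _ _
    have h3 : pochC (2*(a:ℂ) + (k:ℂ)) (m+2)
        = (2*(a:ℂ)+(k:ℂ)) * (pochC (2*(a:ℂ) + (k:ℂ) + 1) m * (2*(a:ℂ)+(k:ℂ)+1+(m:ℂ))) := by
      rw [pochC_succ_left, pochC_succ]
    have h5 : pochC (2*(a:ℂ) + (k:ℂ)) (m+1)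
        = (2*(a:ℂ)+(k:ℂ)) * pochC (2*(a:ℂ) + (k:ℂ) + 1) m := pochC_succ_left _ _
    rw [hA, h1, h2, h3, h5]
    have n1 : ((k+1+m+2).choose (k+1) : ℂ)
        = ((k+1+m+1).choose k : ℂ) + ((k+1+m+1).choose (k+1) : ℂ) := by
      exact_mod_cast congrArg (Nat.cast (R := ℂ)) (Nat.choose_succ_succ (k+1+m+1) k)
    have n2 : ((k+1+m+1).choose (k+1) : ℂ)
        = ((k+1+m).choose k : ℂ) + ((k+1+m).choose (k+1) : ℂ) := by
      exact_mod_cast congrArg (Nat.cast (R := ℂ)) (Nat.choose_succ_succ (k+1+m) k)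
    have n3 : ((k+1+m).choose k : ℂ) * ((k:ℂ)+1+(m:ℂ)+1)
        = ((k+1+m+1).choose k : ℂ) * ((m:ℂ)+2) := by
      have h := Nat.choose_mul_succ_eq (k+1+m) k
      rw [show k+1+m+1 - k = m+2 from by omega] at h
      exact_mod_cast congrArg (Nat.cast (R := ℂ)) h
    push_cast
    linear_combination
      (-((-1:ℂ))^k * pochC ((a:ℂ)+(b:ℂ)*Complex.I) k * pochC (2*(a:ℂ)+(k:ℂ)+1) m
          * (2*(a:ℂ)+(k:ℂ)+(m:ℂ)+1) * (((a:ℂ)+(b:ℂ)*Complex.I)+(k:ℂ)) * (2*(a:ℂ)+(k:ℂ)+(m:ℂ)+2)) * n1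
      + (((-1:ℂ))^k * pochC ((a:ℂ)+(b:ℂ)*Complex.I) k * pochC (2*(a:ℂ)+(k:ℂ)+1) m
          * (2*(a:ℂ)+(k:ℂ)+(m:ℂ)+1) * ((k:ℂ)+(m:ℂ)+2) * (((a:ℂ)+(b:ℂ)*Complex.I)+(k:ℂ))) * n2
      + (((-1:ℂ))^k * pochC ((a:ℂ)+(b:ℂ)*Complex.I) k * pochC (2*(a:ℂ)+(k:ℂ)+1) m
          * (2*(a:ℂ)+(k:ℂ)+(m:ℂ)+1) * (((a:ℂ)+(b:ℂ)*Complex.I) - 2*(a:ℂ))) * n3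
  · -- k ≥ J
    rcases Nat.lt_or_ge k (J+2) with h2 | h2
    · obtain hk | hk : k = J ∨ k = J + 1 := by omega
      · subst hk
        simp only [cc, Nat.choose_succ_self_right, Nat.choose_self, Nat.choose_succ_self,
          Nat.cast_zero, Nat.cast_one, zero_mul, mul_zero,
          show k+2-(k+1) = 1 from by omega, show k+1-(k+1) = 0 from by omega,
          show k+1-k = 1 from by omega, show k-k = 0 from by omega,
          pochC_zero, pochC_succ, mul_one, one_mul]
        push_cast
        ring
      · subst hk
        simp only [cc, Nat.choose_self, Nat.choose_succ_self, Nat.cast_zero, Nat.cast_one,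
          Nat.choose_eq_zero_of_lt (show J < J+2 from by omega),
          show J+1+1-(J+1+1) = 0 from by omega, show J+1+1 = J+2 from rfl,
          show J+2-(J+2) = 0 from by omega, show J+1-(J+1) = 0 from by omega,
          pochC_zero, mul_one, one_mul, zero_mul, mul_zero]
        rw [pochC_succ (((a:ℂ) + (b:ℂ)*Complex.I)) (J+1)]
        push_cast
        ring
    · rw [cc_eq_zero a b (show J+2 < k+1 from by omega),
        cc_eq_zero a b (show J+1 < k+1 from by omega),
        cc_eq_zero a b (show J+1 < k from by omega),
        cc_eq_zero a b (show J < k+1 from by omega),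
        cc_eq_zero a b (show J < k from by omega)]
      ring

/-- The polynomials `r̃_j` satisfy the three-term recurrence
`r̃_{j+1}(z) = ((a+j−ib)+(a+j+ib)z)·r̃_j(z) − j(2a+j−1)·z·r̃_{j−1}(z)`
for every `j ≥ 0`, with conventions `r̃_{−1} = 0`, `r̃_0 = 1`. -/
theorem stmt_13 (a b : ℝ) (j : ℕ) :
    rpoly a b (j + 1) =
      (Polynomial.C ((a : ℂ) + (j : ℂ) - (b : ℂ) * Complex.I) +
          Polynomial.C ((a : ℂ) + (j : ℂ) + (b : ℂ) * Complex.I) * Polynomial.X) *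
        rpoly a b j -
      Polynomial.C ((j : ℂ) * (2 * (a : ℂ) + (j : ℂ) - 1)) * Polynomial.X *
        (if j = 0 then 0 else rpoly a b (j - 1)) := by
  rcases j with _ | J
  · -- j = 0
    simp only [if_pos, Nat.cast_zero, zero_mul, map_zero, mul_zero, sub_zero, add_zero]
    rw [rpoly_ext a b (0+1) 2 (by omega), rpoly_ext a b 0 2 (by omega)]
    have h0 : cc a b 0 0 = 1 := by simp [cc, pochC_zero]
    have h01 : cc a b 0 1 = 0 := cc_eq_zero a b (by omega)
    have h10 : cc a b (0+1) 0 = 2*(a:ℂ) := by simp [cc, pochC_succ, pochC_zero]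
    have h11 : cc a b (0+1) 1 = -((a:ℂ) + (b:ℂ)*Complex.I) := by
      simp [cc, pochC_succ, pochC_zero]
    simp only [Finset.sum_range_succ, Finset.sum_range_one, pow_zero, pow_one, mul_one]
    rw [h0, h01, h10, h11, map_zero, zero_mul, add_zero, map_one]
    simp only [map_mul, map_add, map_sub, map_neg, map_one, map_ofNat]
    ring
  · -- j = J+1
    rw [if_neg (by omega), Nat.add_sub_cancel]
    rw [rpoly_ext a b (J+1+1) (J+2+1) (by omega), rpoly_ext a b (J+1) (J+2+1) (by omega),
      rpoly_ext a b J (J+2+1) (by omega)]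
    rw [mulsplit, mulsplit2]
    rw [shift' (J+2) (fun k => ((a:ℂ) + (((J+1 : ℕ)) : ℂ) + (b:ℂ)*Complex.I) * cc a b (J+1) k)
      (by show ((a:ℂ) + (((J+1 : ℕ)) : ℂ) + (b:ℂ)*Complex.I) * cc a b (J+1) (J+2) = 0
          rw [cc_eq_zero a b (by omega), mul_zero])]
    rw [shift' (J+2) (fun k => ((((J+1 : ℕ)) : ℂ) * (2*(a:ℂ) + (((J+1 : ℕ)) : ℂ) - 1)) * cc a b J k)
      (by show ((((J+1 : ℕ)) : ℂ) * (2*(a:ℂ) + (((J+1 : ℕ)) : ℂ) - 1)) * cc a b J (J+2) = 0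
          rw [cc_eq_zero a b (by omega), mul_zero])]
    simp only [← Finset.sum_sub_distrib]
    refine Finset.sum_congr rfl fun k _ => ?_
    rcases k with _ | k
    · simp only [reduceIte, map_zero, zero_mul, sub_zero, pow_zero, mul_one]
      simp only [show J+1+1 = J+2 from rfl]
      rw [keyA a b J]
      simp only [map_mul, map_add, map_sub, map_one, map_ofNat, Nat.cast_add, Nat.cast_one]
      ring
    · rw [if_neg (Nat.succ_ne_zero k), if_neg (Nat.succ_ne_zero k)]
      simp only [Nat.add_sub_cancel]
      simp only [show J+1+1 = J+2 from rfl]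
      rw [keyB a b J k]
      simp only [map_mul, map_add, map_sub, map_one, map_ofNat, Nat.cast_add, Nat.cast_one]
      ring
end

section
/- Let a > 0 be real, n ≥ 0 an integer, and let λ_1, …, λ_{n+1} be positive real numbers satisfying j (2a + j − 1) λ_j λ_{j+1} = 1 for j = 1, …, n. Then the (n+1)×(n+1) real symmetric tridiagonal matrix T with diagonal entries T_{j,j} = (j + a) λ_{j+1} for j = 0, …, n (rows and columns indexed from 0), off-diagonal entries T_{j,j+1} = T_{j+1,j} = −1/2, and all other entries zero, is positive definite. -/
open Matrix Finset

/-- For `a > 0` and positive numbers `λ_1, …, λ_{n+1}` with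
`j(2a+j−1)λ_j λ_{j+1} = 1` (`j = 1, …, n`), the real symmetric tridiagonal matrix with
diagonal entries `(j+a)λ_{j+1}` (`j = 0, …, n`) and off-diagonal entries `−1/2` is
positive definite. -/
theorem stmt_16 (a : ℝ) (ha : 0 < a) (n : ℕ) (lam : ℕ → ℝ)
    (hlam : ∀ j, 1 ≤ j → j ≤ n + 1 → 0 < lam j)
    (hrec : ∀ j, 1 ≤ j → j ≤ n → (j : ℝ) * (2 * a + j - 1) * lam j * lam (j + 1) = 1) :
    (Matrix.of fun i j : Fin (n + 1) =>
      if i = j then ((i : ℕ) + a) * lam ((i : ℕ) + 1)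
      else if (i : ℕ) + 1 = (j : ℕ) ∨ (j : ℕ) + 1 = (i : ℕ) then -(1 / 2 : ℝ)
      else 0).PosDef := by
  rw [posDef_iff_dotProduct_mulVec]
  constructor
  · ext i j
    simp only [conjTranspose_apply, of_apply, star_trivial]
    rcases eq_or_ne i j with h | h
    · subst h; simp
    · simp [h, h.symm, or_comm]
  · intro x hx
    set x' : ℕ → ℝ := fun i => if h : i < n + 1 then x ⟨i, h⟩ else 0 with hx'def
    have hx'fin : ∀ i : Fin (n + 1), x' i = x i := fun i => by
      simp [hx'def, i.isLt]; intro h; exact absurd i.isLt (by omega)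
    have hx'top : ∀ m, n < m → x' m = 0 := fun m hm => by
      simp only [hx'def]; rw [dif_neg (by omega)]
    set s : ℕ → ℝ := fun j => (2 * a + j) * lam (j + 1) / 2 with hsdef
    have hspos : ∀ j ≤ n, 0 < s j := by
      intro j hj
      have h1 := hlam (j + 1) (by omega) (by omega)
      have h2 : (0:ℝ) < 2 * a + j := by positivity
      simp only [hsdef]; positivity
    set E : ℕ → ℕ → ℝ := fun i k =>
      if i = k then ((i : ℝ) + a) * lam (i + 1)
      else if i + 1 = k ∨ k + 1 = i then -(1 / 2 : ℝ) else 0 with hEdef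
    -- Step 1: the quadratic form as explicit sums over ℕ indices
    have hQ : star x ⬝ᵥ ((Matrix.of fun i j : Fin (n + 1) =>
        if i = j then ((i : ℕ) + a) * lam ((i : ℕ) + 1)
        else if (i : ℕ) + 1 = (j : ℕ) ∨ (j : ℕ) + 1 = (i : ℕ) then -(1 / 2 : ℝ)
        else 0) *ᵥ x)
        = ∑ i ∈ range (n + 1), x' i * ∑ k ∈ range (n + 1), E i k * x' k := by
      simp only [dotProduct, mulVec, of_apply, star_trivial, Pi.star_apply]
      rw [← Fin.sum_univ_eq_sum_range (fun i => x' i * ∑ k ∈ range (n+1), E i k * x' k)]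
      refine Finset.sum_congr rfl fun i _ => ?_
      rw [← Fin.sum_univ_eq_sum_range (fun k => E i k * x' k), hx'fin]
      congr 1
      refine Finset.sum_congr rfl fun k _ => ?_
      rw [hx'fin]
      simp only [hEdef, Fin.ext_iff]
    have hE3 : ∀ i k : ℕ, E i k * x' k
        = (if i = k then ((i : ℝ) + a) * lam (i + 1) * x' k else 0)
          + (if i + 1 = k then -(1 / 2 : ℝ) * x' k else 0)
          + (if k + 1 = i then -(1 / 2 : ℝ) * x' k else 0) := by
      intro i k
      simp only [hEdef]
      split_ifs <;> (first | ring1 | (exfalso; omega))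
    -- Step 2: evaluate the double sum
    have hQ2 : (∑ i ∈ range (n + 1), x' i * ∑ k ∈ range (n + 1), E i k * x' k)
        = (∑ i ∈ range (n + 1), ((i : ℝ) + a) * lam (i + 1) * x' i ^ 2)
          - ∑ i ∈ range (n + 1), x' i * x' (i + 1) := by
      have expand : ∀ i ∈ range (n+1),
          x' i * ∑ k ∈ range (n + 1), E i k * x' k
          = (((i : ℝ) + a) * lam (i + 1) * x' i ^ 2 - (1/2) * (x' i * x' (i + 1)))
            + ∑ k ∈ range (n + 1), (if k + 1 = i then -(1 / 2 : ℝ) * (x' i * x' k) else 0) := by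
        intro i hi
        have h1 : ∑ k ∈ range (n + 1), E i k * x' k
            = (∑ k ∈ range (n + 1), (if i = k then ((i : ℝ) + a) * lam (i + 1) * x' k else 0))
              + (∑ k ∈ range (n + 1), (if i + 1 = k then -(1 / 2 : ℝ) * x' k else 0))
              + (∑ k ∈ range (n + 1), (if k + 1 = i then -(1 / 2 : ℝ) * x' k else 0)) := by
          rw [← Finset.sum_add_distrib, ← Finset.sum_add_distrib]
          exact Finset.sum_congr rfl fun k _ => hE3 i k
        rw [h1, Finset.sum_ite_eq, if_pos hi, Finset.sum_ite_eq]
        have h2 : (if i + 1 ∈ range (n + 1) then -(1 / 2 : ℝ) * x' (i+1) else 0)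
            = -(1/2) * x' (i+1) := by
          split_ifs with h
          · rfl
          · rw [hx'top (i+1) (by simp only [mem_range] at h; omega)]; ring
        rw [h2, mul_add, mul_add, Finset.mul_sum]
        congr 1
        · ring
        · exact Finset.sum_congr rfl fun k _ => by split_ifs <;> ring
      rw [Finset.sum_congr rfl expand, Finset.sum_add_distrib]
      have hC : (∑ i ∈ range (n+1),
          ∑ k ∈ range (n + 1), (if k + 1 = i then -(1 / 2 : ℝ) * (x' i * x' k) else 0))
          = ∑ k ∈ range (n+1), -(1/2) * (x' k * x' (k+1)) := by
        rw [Finset.sum_comm]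
        refine Finset.sum_congr rfl fun k _ => ?_
        rw [Finset.sum_ite_eq]
        split_ifs with h
        · ring
        · rw [hx'top (k+1) (by simp only [mem_range] at h; omega)]; ring
      rw [hC, Finset.sum_sub_distrib, sub_add, ← Finset.sum_sub_distrib]
      congr 1
      exact Finset.sum_congr rfl fun i _ => by ring
    -- Step 3: completing the square
    have hSOS : (∑ i ∈ range (n + 1), ((i : ℝ) + a) * lam (i + 1) * x' i ^ 2)
          - (∑ i ∈ range (n + 1), x' i * x' (i + 1))
        = ∑ j ∈ range (n + 1), s j * (x' j - x' (j + 1) / (2 * s j)) ^ 2 := by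
      have hexp : ∀ j ∈ range (n+1), s j * (x' j - x' (j + 1) / (2 * s j)) ^ 2
          = s j * x' j ^ 2 - x' j * x' (j+1) + x' (j+1) ^ 2 / (4 * s j) := by
        intro j hj
        have hs := hspos j (by simp only [mem_range] at hj; omega)
        field_simp
        ring
      rw [Finset.sum_congr rfl hexp, Finset.sum_add_distrib, Finset.sum_sub_distrib]
      have h3 : (∑ j ∈ range (n + 1), x' (j+1) ^ 2 / (4 * s j))
          = ∑ j ∈ range (n + 1), ((j:ℝ) * lam (j + 1) / 2) * x' j ^ 2 := by
        rw [Finset.sum_range_succ, hx'top (n+1) (by omega),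
          Finset.sum_range_succ' (fun j => ((j:ℝ) * lam (j + 1) / 2) * x' j ^ 2)]
        simp only [Nat.cast_zero, zero_mul, zero_div, zero_mul, ne_eq, OfNat.ofNat_ne_zero,
          not_false_eq_true, zero_pow, mul_zero, add_zero]
        refine Finset.sum_congr rfl fun j hj => ?_
        have hj' : j < n := mem_range.mp hj
        have hr := hrec (j+1) (by omega) (by omega)
        have hsj := hspos j (by omega)
        push_cast at hr ⊢
        rw [div_eq_iff (by positivity : (4 * s j) ≠ 0), hsdef]
        linear_combination (-(x' (j+1) ^ 2)) * hr
      rw [h3, sub_add_eq_add_sub, ← Finset.sum_add_distrib]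
      congr 1
      refine Finset.sum_congr rfl fun j _ => ?_
      simp only [hsdef]
      ring
    rw [hQ, hQ2, hSOS]
    -- positivity: pick the largest index where x is nonzero
    have hxne : ∃ i : Fin (n+1), x i ≠ 0 := by
      by_contra h; push_neg at h; exact hx (funext h)
    obtain ⟨i0, hi0⟩ := hxne
    set S : Finset ℕ := (range (n+1)).filter (fun m => x' m ≠ 0) with hS
    have hSne : S.Nonempty := ⟨i0, by
      simp only [hS, mem_filter, mem_range]
      exact ⟨i0.isLt, by rw [hx'fin i0]; exact hi0⟩⟩
    set j := S.max' hSne with hj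
    have hjS : j ∈ S := S.max'_mem hSne
    have hjr : j ∈ range (n+1) := (mem_filter.mp hjS).1
    have hjn : j ≤ n := by have := mem_range.mp hjr; omega
    have hjne : x' j ≠ 0 := (mem_filter.mp hjS).2
    have hjtop : x' (j+1) = 0 := by
      by_cases h : j + 1 ≤ n
      · by_contra hne
        have hmem : j + 1 ∈ S := mem_filter.mpr ⟨mem_range.mpr (by omega), hne⟩
        have := S.le_max' _ hmem
        omega
      · exact hx'top _ (by omega)
    apply Finset.sum_pos'
    · intro m hm
      have := hspos m (by have := mem_range.mp hm; omega)
      positivity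
    · refine ⟨j, hjr, ?_⟩
      have hsj := hspos j hjn
      rw [hjtop]
      have hrw : x' j - 0 / (2 * s j) = x' j := by ring
      rw [hrw]
      positivity
end
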